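/- Let E = ℂ/Λ be a complex elliptic curve and α, β, γ, δ ∈ E four mutually distinct points. Define h_{α,β,γ,δ}(z) = [℘(z-α), ℘(z-β), ℘(z-γ), ℘(z-δ)] (the cross ratio). Then h_{α,β,γ,δ} is invariant under translation by every element of the 2-torsion subgroup E[2]: h_{α,β,γ,δ}(z + t) = h_{α,β,γ,δ}(z) for all t ∈ E[2]. -/

import Mathlib

open Filter Topology

/-- The lattice `⟨1, τ⟩ ⊆ ℂ`. -/
noncomputable def lat (τ : ℂ) : AddSubgroup ℂ := AddSubgroup.closure {1, τ}

/-- `IsWeierstrassP τ ℘` says that `℘` is the Weierstrass `℘`-function of the lattice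
`⟨1,τ⟩` (with junk values at lattice points): it is `⟨1,τ⟩`-periodic, even, analytic off
the lattice, and satisfies `℘(z) = z⁻² + o(z)` near `0`.  These conditions determine `℘`
uniquely off the lattice. -/
structure IsWeierstrassP (τ : ℂ) (℘ : ℂ → ℂ) : Prop where
  periodic : ∀ w ∈ lat τ, ∀ z, ℘ (z + w) = ℘ z
  even : ∀ z, ℘ (-z) = ℘ z
  analytic : AnalyticOnNhd ℂ ℘ {z | z ∉ lat τ}
  pole : Tendsto (fun z : ℂ => (℘ z - (z ^ 2)⁻¹) / z) (𝓝[≠] 0) (𝓝 0)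

lemma lat_mem_iff {τ w : ℂ} : w ∈ lat τ ↔ ∃ m n : ℤ, (m : ℂ) + n * τ = w := by
  rw [lat, AddSubgroup.mem_closure_pair]
  simp [zsmul_eq_mul]

lemma lat_norm {τ : ℂ} (hτ : 0 < τ.im) {w : ℂ} (hw : w ∈ lat τ) (h0 : w ≠ 0) :
    min 1 τ.im ≤ ‖w‖ := by
  obtain ⟨m, n, rfl⟩ := lat_mem_iff.1 hw
  by_contra h
  push_neg at h
  have him : |((m : ℂ) + n * τ).im| ≤ ‖(m : ℂ) + n * τ‖ := Complex.abs_im_le_norm _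
  have him2 : ((m : ℂ) + n * τ).im = n * τ.im := by
    simp [Complex.add_im, Complex.mul_im]
  have hn : n = 0 := by
    by_contra hn
    have h1 : (1 : ℝ) ≤ |(n : ℝ)| := by
      rw [← Int.cast_abs]; exact_mod_cast Int.one_le_abs hn
    have h2 : τ.im ≤ |(n : ℝ)| * τ.im := le_mul_of_one_le_left hτ.le h1
    rw [him2, abs_mul] at him
    have h3 : |(n:ℝ)| * |τ.im| = |(n:ℝ)| * τ.im := by rw [abs_of_pos hτ]
    rw [h3] at him
    exact absurd (h.trans_le (min_le_right _ _)) (not_lt.2 (h2.trans him))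
  subst hn
  simp only [Int.cast_zero, zero_mul, add_zero] at h h0 ⊢
  have hm : m ≠ 0 := by simpa using h0
  have h1 : (1 : ℝ) ≤ |(m : ℝ)| := by
    rw [← Int.cast_abs]; exact_mod_cast Int.one_le_abs hm
  have : ‖(m : ℂ)‖ = |(m : ℝ)| := by
    rw [← Complex.ofReal_intCast, Complex.norm_real, Real.norm_eq_abs]
  rw [this] at h
  exact absurd (h.trans_le (min_le_left _ _)) (not_lt.2 h1)

lemma F_const (τ : ℂ) (hτ : 0 < τ.im) (℘ : ℂ → ℂ) (h℘ : IsWeierstrassP τ ℘)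
    (t : ℂ) (ht2 : t + t ∈ lat τ) (htL : t ∉ lat τ) {u v : ℂ}
    (hu1 : u ∉ lat τ) (hu2 : u - t ∉ lat τ) (hv1 : v ∉ lat τ) (hv2 : v - t ∉ lat τ) :
    (℘ u - ℘ t) * (℘ (u + t) - ℘ t) = (℘ v - ℘ t) * (℘ (v + t) - ℘ t) := by
  classical
  set m : ℝ := min 1 τ.im with hm_def
  have hm : 0 < m := lt_min one_pos hτ
  set S : Set ℂ := {w : ℂ | w ∈ lat τ ∨ w - t ∈ lat τ} with hS_def
  set e : ℂ := ℘ t with he_def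
  set F : ℂ → ℂ := fun z => (℘ z - e) * (℘ (z + t) - e) with hF_def
  -- separation of S
  have hS2 : ∀ w ∈ S, w + w ∈ lat τ := by
    rintro w (h | h)
    · exact add_mem h h
    · have := add_mem (add_mem h h) ht2
      have heq : w - t + (w - t) + (t + t) = w + w := by ring
      rwa [heq] at this
  have hSsep : ∀ w ∈ S, ∀ w' ∈ S, w ≠ w' → m / 2 ≤ ‖w - w'‖ := by
    intro w hw w' hw' hne
    have hd : (w + w) - (w' + w') ∈ lat τ := sub_mem (hS2 w hw) (hS2 w' hw')
    have hd0 : (w + w) - (w' + w') ≠ 0 := by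
      intro h
      apply hne
      have : (2 : ℂ) * (w - w') = 0 := by linear_combination h
      have := mul_eq_zero.1 this
      rcases this with h2 | h2
      · norm_num at h2
      · exact sub_eq_zero.1 h2
    have := lat_norm hτ hd hd0
    have heq : (w + w) - (w' + w') = (2 : ℂ) * (w - w') := by ring
    rw [heq] at this
    rw [norm_mul] at this
    simp only [Complex.norm_ofNat] at this
    linarith
  -- isolation
  have hiso : ∀ z : ℂ, ∃ r > 0, ∀ w ∈ S, w ≠ z → r ≤ ‖w - z‖ := by
    intro z
    by_cases hex : ∃ w₀ ∈ S, w₀ ≠ z ∧ ‖w₀ - z‖ < m / 4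
    · obtain ⟨w₀, hw₀S, hw₀ne, hw₀lt⟩ := hex
      refine ⟨min (m / 4) ‖w₀ - z‖, lt_min (by linarith) (norm_pos_iff.2 (sub_ne_zero.2 hw₀ne)), ?_⟩
      intro w hwS hwne
      by_cases hww : w = w₀
      · subst hww; exact min_le_right _ _
      · have h1 := hSsep w hwS w₀ hw₀S hww
        have h2 : ‖w - w₀‖ ≤ ‖w - z‖ + ‖w₀ - z‖ := by
          have := norm_sub_le (w - z) (w₀ - z)
          have heq : (w - z) - (w₀ - z) = w - w₀ := by ring
          rwa [heq] at this
        have : m / 4 ≤ ‖w - z‖ := by linarith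
        exact le_trans (min_le_left _ _) this
    · push_neg at hex
      exact ⟨m / 4, by linarith, fun w hw hne => hex w hw hne⟩
  -- analyticity of F off S
  have hFanalytic : ∀ z ∉ S, AnalyticAt ℂ F z := by
    intro z hz
    have hz1 : z ∉ lat τ := fun h => hz (Or.inl h)
    have hz2 : z + t ∉ lat τ := by
      intro h
      apply hz
      right
      have : z + t - (t + t) ∈ lat τ := sub_mem h ht2
      have heq : z + t - (t + t) = z - t := by ring
      rwa [heq] at this
    have h1 : AnalyticAt ℂ ℘ z := h℘.analytic z hz1
    have hin : AnalyticAt ℂ (fun w : ℂ => w + t) z := by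
      exact analyticAt_id.add analyticAt_const
    have h2 : AnalyticAt ℂ (fun w => ℘ (w + t)) z := by
      have := AnalyticAt.comp (𝕜 := ℂ) (g := ℘) (f := fun w : ℂ => w + t) (x := z)
        (by exact h℘.analytic (z + t) hz2) hin
      exact this
    exact (h1.sub analyticAt_const).mul (h2.sub analyticAt_const)
  -- periodicity
  have hFper : ∀ w ∈ lat τ, ∀ z, F (z + w) = F z := by
    intro w hw z
    have h1 : ℘ (z + w) = ℘ z := h℘.periodic w hw z
    have h2 : ℘ (z + w + t) = ℘ (z + t) := by
      have heq : z + w + t = z + t + w := by ring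
      rw [heq]; exact h℘.periodic w hw (z + t)
    simp only [hF_def, h1, h2]
  have hFt : ∀ z, F (z + t) = F z := by
    intro z
    have h1 : ℘ (z + t + t) = ℘ z := by
      have heq : z + t + t = z + (t + t) := by ring
      rw [heq]; exact h℘.periodic (t + t) ht2 z
    simp only [hF_def, h1]
    ring
  have hFS : ∀ w ∈ S, ∀ z, F (z + w) = F z := by
    rintro w (h | h) z
    · exact hFper w h z
    · have heq : z + w = z + (w - t) + t := by ring
      rw [heq, hFt, hFper _ h]
  -- limit at 0
  have hganal : AnalyticAt ℂ (fun z => ℘ (z + t) - e) 0 := by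
    have hin : AnalyticAt ℂ (fun w : ℂ => w + t) 0 := by
      exact analyticAt_id.add analyticAt_const
    have h2 := AnalyticAt.comp (𝕜 := ℂ) (g := ℘) (f := fun w : ℂ => w + t) (x := (0:ℂ))
      (by exact h℘.analytic (0 + t) (by rw [zero_add]; exact htL)) hin
    have h3 : AnalyticAt ℂ (fun w : ℂ => ℘ (w + t)) 0 := h2
    exact h3.sub analyticAt_const
  set g : ℂ → ℂ := fun z => ℘ (z + t) - e with hg_def
  have hg0 : g 0 = 0 := by simp [hg_def, he_def]
  have hgeven : ∀ z, g (-z) = g z := by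
    intro z
    simp only [hg_def]
    have h1 : ℘ (-z + t) = ℘ (z - t) := by
      have : -(z - t) = -z + t := by ring
      rw [← this, h℘.even]
    have h2 : ℘ (z - t) = ℘ (z + t) := by
      have h := h℘.periodic (t + t) ht2 (z - t)
      have heq : z - t + (t + t) = z + t := by ring
      rw [heq] at h
      exact h.symm
    rw [h1, h2]
  have hderiv : deriv g 0 = 0 := by
    have hfun : (fun z => g (-z)) = g := funext hgeven
    have h1 : deriv (fun z => g (-z)) 0 = -deriv g (-0) := deriv_comp_neg g 0
    rw [hfun, neg_zero] at h1
    linear_combination h1 / 2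
  set g₁ : ℂ → ℂ := dslope g 0 with hg₁_def
  set g₂ : ℂ → ℂ := dslope g₁ 0 with hg₂_def
  have hg₁anal : AnalyticAt ℂ g₁ 0 := by
    obtain ⟨p, hp⟩ := hganal
    exact ⟨_, hp.has_fpower_series_dslope_fslope⟩
  have hg₂anal : AnalyticAt ℂ g₂ 0 := by
    obtain ⟨p, hp⟩ := hg₁anal
    exact ⟨_, hp.has_fpower_series_dslope_fslope⟩
  have hfac : ∀ z : ℂ, g z = z ^ 2 * g₂ z := by
    intro z
    have h1 : (z - 0) • g₁ z = g z - g 0 := sub_smul_dslope g 0 z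
    have h2 : (z - 0) • g₂ z = g₁ z - g₁ 0 := sub_smul_dslope g₁ 0 z
    have h3 : g₁ 0 = deriv g 0 := dslope_same g 0
    rw [sub_zero, smul_eq_mul] at h1 h2
    rw [hg0, sub_zero] at h1
    rw [h3, hderiv, sub_zero] at h2
    rw [← h1, ← h2]; ring
  set L : ℂ := g₂ 0 with hL_def
  have hq : Tendsto (fun z : ℂ => z ^ 2 * (℘ z - e)) (𝓝[≠] 0) (𝓝 1) := by
    have h1 : Tendsto (fun z : ℂ => z ^ 3 * ((℘ z - (z ^ 2)⁻¹) / z) + (1 - e * z ^ 2))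
        (𝓝[≠] 0) (𝓝 1) := by
      have hcube : Tendsto (fun z : ℂ => z ^ 3) (𝓝[≠] 0) (𝓝 0) := by
        have : Tendsto (fun z : ℂ => z ^ 3) (𝓝 0) (𝓝 (0 ^ 3)) :=
          (continuous_pow 3).tendsto 0
        simpa using this.mono_left nhdsWithin_le_nhds
      have hmul : Tendsto (fun z : ℂ => z ^ 3 * ((℘ z - (z ^ 2)⁻¹) / z)) (𝓝[≠] 0) (𝓝 0) := by
        have := hcube.mul h℘.pole
        simpa using this
      have hrest : Tendsto (fun z : ℂ => 1 - e * z ^ 2) (𝓝[≠] 0) (𝓝 1) := by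
        have : Tendsto (fun z : ℂ => 1 - e * z ^ 2) (𝓝 0) (𝓝 (1 - e * 0 ^ 2)) := by
          apply Tendsto.sub tendsto_const_nhds
          exact (tendsto_const_nhds.mul ((continuous_pow 2).tendsto 0))
        simpa using this.mono_left nhdsWithin_le_nhds
      have := hmul.add hrest
      simpa using this
    apply h1.congr'
    filter_upwards [self_mem_nhdsWithin] with z hz
    have hz0 : z ≠ 0 := hz
    field_simp
    ring
  have hF0 : Tendsto F (𝓝[≠] 0) (𝓝 L) := by
    have hg₂t : Tendsto g₂ (𝓝[≠] 0) (𝓝 L) :=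
      (hg₂anal.continuousAt.tendsto).mono_left nhdsWithin_le_nhds
    have := hq.mul hg₂t
    rw [one_mul] at this
    apply this.congr
    intro z
    have := hfac z
    simp only [hF_def, hg_def] at this ⊢
    rw [this]; ring
  have hFp : ∀ p ∈ S, Tendsto F (𝓝[≠] p) (𝓝 L) := by
    intro p hp
    have hshift : ∀ z, F z = F (z - p) := by
      intro z
      have h := hFS p hp (z - p)
      rw [sub_add_cancel] at h
      exact h
    have hmap : Tendsto (fun z => z - p) (𝓝[≠] p) (𝓝[≠] 0) := by
      apply tendsto_nhdsWithin_of_tendsto_nhds_of_eventually_within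
      · have : Tendsto (fun z : ℂ => z - p) (𝓝 p) (𝓝 (p - p)) :=
          (continuous_id.sub continuous_const).tendsto p
        rw [sub_self] at this
        exact this.mono_left nhdsWithin_le_nhds
      · filter_upwards [self_mem_nhdsWithin] with z hz
        exact sub_ne_zero.2 hz
    exact (hF0.comp hmap).congr fun z => (hshift z).symm
  -- the glued function
  set G : ℂ → ℂ := fun z => if z ∈ S then L else F z with hG_def
  have hGF : ∀ z ∉ S, G z = F z := fun z hz => if_neg hz
  have hGdiff : Differentiable ℂ G := by
    intro z₀
    obtain ⟨r, hr, hrS⟩ := hiso z₀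
    by_cases hz₀ : z₀ ∈ S
    · have hT := hFp z₀ hz₀
      have hb : ∀ᶠ z in 𝓝[≠] z₀, ‖F z‖ < ‖L‖ + 1 :=
        (hT.norm).eventually_lt_const (lt_add_one ‖L‖)
      rw [eventually_nhdsWithin_iff, Metric.eventually_nhds_iff] at hb
      obtain ⟨ε, hε, hball⟩ := hb
      set ρ := min r ε with hρ_def
      have hρ : 0 < ρ := lt_min hr hε
      have hsub : ∀ w ∈ Metric.ball z₀ ρ \ {z₀}, w ∉ S := by
        rintro w ⟨hw1, hw2⟩ hwS
        have h1 := hrS w hwS hw2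
        rw [Metric.mem_ball, Complex.dist_eq] at hw1
        have : ‖w - z₀‖ < r := lt_of_lt_of_le hw1 (min_le_left _ _)
        exact absurd this (not_lt.2 h1)
      have hdiffOn : DifferentiableOn ℂ F (Metric.ball z₀ ρ \ {z₀}) := fun w hw =>
        ((hFanalytic w (hsub w hw)).differentiableAt).differentiableWithinAt
      have hbdd : BddAbove (norm ∘ F '' (Metric.ball z₀ ρ \ {z₀})) := by
        refine ⟨‖L‖ + 1, ?_⟩
        rintro x ⟨w, ⟨hw1, hw2⟩, rfl⟩
        rw [Metric.mem_ball] at hw1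
        exact (hball (lt_of_lt_of_le hw1 (min_le_right _ _)) hw2).le
      have hupd := Complex.differentiableOn_update_limUnder_of_bddAbove
        (Metric.ball_mem_nhds z₀ hρ) hdiffOn hbdd
      rw [hT.limUnder_eq] at hupd
      have hGeq : G =ᶠ[𝓝 z₀] Function.update F z₀ L := by
        filter_upwards [Metric.ball_mem_nhds z₀ hρ] with w hw
        by_cases hwz : w = z₀
        · subst hwz
          rw [Function.update_self]
          exact if_pos hz₀
        · rw [Function.update_of_ne hwz]
          exact if_neg (hsub w ⟨hw, hwz⟩)
      exact hGeq.differentiableAt_iff.2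
        (hupd.differentiableAt (Metric.ball_mem_nhds z₀ hρ))
    · have hGeq : G =ᶠ[𝓝 z₀] F := by
        filter_upwards [Metric.ball_mem_nhds z₀ hr] with w hw
        apply if_neg
        intro hwS
        have hwne : w ≠ z₀ := fun h => hz₀ (h ▸ hwS)
        have := hrS w hwS hwne
        rw [Metric.mem_ball, Complex.dist_eq] at hw
        exact absurd hw (not_lt.2 this)
      exact hGeq.differentiableAt_iff.2 (hFanalytic z₀ hz₀).differentiableAt
  have hGper : ∀ w ∈ lat τ, ∀ z, G (z + w) = G z := by
    intro w hw z
    have hmemiff : z + w ∈ S ↔ z ∈ S := by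
      constructor
      · rintro (h | h)
        · left
          have := sub_mem h hw
          have heq : z + w - w = z := by ring
          rwa [heq] at this
        · right
          have := sub_mem h hw
          have heq : z + w - t - w = z - t := by ring
          rwa [heq] at this
      · rintro (h | h)
        · exact Or.inl (add_mem h hw)
        · right
          have := add_mem h hw
          have heq : z - t + w = z + w - t := by ring
          rwa [heq] at this
    by_cases hzS : z ∈ S
    · show (if z + w ∈ S then L else F (z + w)) = (if z ∈ S then L else F z)
      rw [if_pos (hmemiff.2 hzS), if_pos hzS]
    · show (if z + w ∈ S then L else F (z + w)) = (if z ∈ S then L else F z)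
      rw [if_neg (fun h => hzS (hmemiff.1 h)), if_neg hzS]
      exact hFper w hw z
  have hbound : Bornology.IsBounded (Set.range G) := by
    set K : Set ℂ := (fun p : ℝ × ℝ => (p.1 : ℂ) + (p.2 : ℂ) * τ) ''
      (Set.Icc (0:ℝ) 1 ×ˢ Set.Icc (0:ℝ) 1) with hK_def
    have hK : IsCompact K :=
      (isCompact_Icc.prod isCompact_Icc).image
        ((Complex.continuous_ofReal.comp continuous_fst).add
          ((Complex.continuous_ofReal.comp continuous_snd).mul continuous_const))
    have hcover : ∀ z : ℂ, ∃ k ∈ K, ∃ w ∈ lat τ, z = k + w := by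
      intro z
      set b : ℝ := z.im / τ.im with hb_def
      set a : ℝ := z.re - b * τ.re with ha_def
      have hz : z = (a : ℂ) + (b : ℂ) * τ := by
        have him : b * τ.im = z.im := div_mul_cancel₀ z.im hτ.ne'
        apply Complex.ext
        · simp [ha_def, Complex.add_re, Complex.mul_re]
        · simp [Complex.add_im, Complex.mul_im, him]
      refine ⟨((Int.fract a : ℝ) : ℂ) + ((Int.fract b : ℝ) : ℂ) * τ,
        ⟨(Int.fract a, Int.fract b),
          ⟨⟨Int.fract_nonneg a, (Int.fract_lt_one a).le⟩,
           ⟨Int.fract_nonneg b, (Int.fract_lt_one b).le⟩⟩, rfl⟩,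
        ((⌊a⌋ : ℤ) : ℂ) + ((⌊b⌋ : ℤ) : ℂ) * τ, lat_mem_iff.2 ⟨⌊a⌋, ⌊b⌋, rfl⟩, ?_⟩
      have hfa : ((Int.fract a : ℝ) : ℂ) = (a : ℂ) - ((⌊a⌋ : ℤ) : ℂ) := by
        rw [← Int.self_sub_floor]; push_cast; ring
      have hfb : ((Int.fract b : ℝ) : ℂ) = (b : ℂ) - ((⌊b⌋ : ℤ) : ℂ) := by
        rw [← Int.self_sub_floor]; push_cast; ring
      rw [hz, hfa, hfb]
      ring
    have hsubset : Set.range G ⊆ G '' K := by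
      rintro _ ⟨z, rfl⟩
      obtain ⟨k, hk, w, hw, rfl⟩ := hcover z
      exact ⟨k, hk, (hGper w hw k).symm⟩
    exact ((hK.image hGdiff.continuous).isBounded).subset hsubset
  have hall : G u = G v := hGdiff.apply_eq_apply_of_bounded hbound u v
  have huS : u ∉ S := by rintro (h | h); exacts [hu1 h, hu2 h]
  have hvS : v ∉ S := by rintro (h | h); exacts [hv1 h, hv2 h]
  rw [hGF u huS, hGF v hvS] at hall
  exact hall


/-- The cross ratio `[a,b,c,d] = ((a-c)(b-d))/((b-c)(a-d))` of four scalars. -/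
noncomputable def crossRatio (a b c d : ℂ) : ℂ := (a - c) * (b - d) / ((b - c) * (a - d))

lemma crossRatio_eq_of_products (Pa Pb Pc Pd Qa Qb Qc Qd e c : ℂ)
    (ha : (Pa - e) * (Qa - e) = c) (hb : (Pb - e) * (Qb - e) = c)
    (hc : (Pc - e) * (Qc - e) = c) (hd : (Pd - e) * (Qd - e) = c)
    (h1 : (Pb - Pc) * (Pa - Pd) ≠ 0) (h2 : (Qb - Qc) * (Qa - Qd) ≠ 0) :
    crossRatio Qa Qb Qc Qd = crossRatio Pa Pb Pc Pd := by
  unfold crossRatio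
  rw [div_eq_div_iff h2 h1]
  linear_combination
    (-(Pd - e) * (Qc - e) + (Pd - e) * (Qb - e) + (Pc - e) * (Qd - e) - (Pc - e) * (Qb - e)
      - (Pb - e) * (Qd - e) + (Pb - e) * (Qc - e)) * ha +
    ((Pd - e) * (Qc - e) - (Pd - e) * (Qa - e) - (Pc - e) * (Qd - e) + (Pc - e) * (Qa - e)
      + (Pa - e) * (Qd - e) - (Pa - e) * (Qc - e)) * hb +
    (-(Pd - e) * (Qb - e) + (Pd - e) * (Qa - e) + (Pb - e) * (Qd - e) - (Pb - e) * (Qa - e)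
      - (Pa - e) * (Qd - e) + (Pa - e) * (Qb - e)) * hc +
    ((Pc - e) * (Qb - e) - (Pc - e) * (Qa - e) - (Pb - e) * (Qc - e) + (Pb - e) * (Qa - e)
      + (Pa - e) * (Qc - e) - (Pa - e) * (Qb - e)) * hd


/-- The function `h_{α,β,γ,δ}(z) = [℘(z-α), ℘(z-β), ℘(z-γ), ℘(z-δ)]`. -/
noncomputable def hCross (℘ : ℂ → ℂ) (α β γ δ : ℂ) (z : ℂ) : ℂ :=
  crossRatio (℘ (z - α)) (℘ (z - β)) (℘ (z - γ)) (℘ (z - δ))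

/-- for four mutually distinct points `α, β, γ, δ` of `E = ℂ/⟨1,τ⟩`, the
function `h_{α,β,γ,δ}` is invariant under translation by every `2`-torsion point `t` of
`E` (stated away from the poles of the four `℘`-factors and the zeros of the
denominators, where all values are genuine). -/
theorem hCross_two_torsion_invariant (τ : ℂ) (hτ : 0 < τ.im)
    (℘ : ℂ → ℂ) (h℘ : IsWeierstrassP τ ℘) (α β γ δ : ℂ)
    (hd : ∀ x ∈ ({α, β, γ, δ} : Set ℂ), ∀ y ∈ ({α, β, γ, δ} : Set ℂ),
      x ≠ y → (QuotientAddGroup.mk x : ℂ ⧸ lat τ) ≠ QuotientAddGroup.mk y)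
    (t z : ℂ) (ht : t + t ∈ lat τ)
    (hz : ∀ x ∈ ({α, β, γ, δ} : Set ℂ), z - x ∉ lat τ ∧ z + t - x ∉ lat τ)
    (hden : (℘ (z - β) - ℘ (z - γ)) * (℘ (z - α) - ℘ (z - δ)) ≠ 0)
    (hden' : (℘ (z + t - β) - ℘ (z + t - γ)) * (℘ (z + t - α) - ℘ (z + t - δ)) ≠ 0) :
    hCross ℘ α β γ δ (z + t) = hCross ℘ α β γ δ z := by
  by_cases htL : t ∈ lat τ
  · unfold hCross
    have h : ∀ x : ℂ, ℘ (z + t - x) = ℘ (z - x) := by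
      intro x
      have h1 := h℘.periodic t htL (z - x)
      rw [show z - x + t = z + t - x from by ring] at h1
      exact h1
    rw [h α, h β, h γ, h δ]
  · have hmem : ∀ x ∈ ({α, β, γ, δ} : Set ℂ),
        z - x ∉ lat τ ∧ z - x - t ∉ lat τ := by
      intro x hx
      refine ⟨(hz x hx).1, fun h => (hz x hx).2 ?_⟩
      have h2 := add_mem h ht
      rw [show z - x - t + (t + t) = z + t - x from by ring] at h2
      exact h2
    have hα : α ∈ ({α, β, γ, δ} : Set ℂ) := by simp
    have hβ : β ∈ ({α, β, γ, δ} : Set ℂ) := by simp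
    have hγ : γ ∈ ({α, β, γ, δ} : Set ℂ) := by simp
    have hδ : δ ∈ ({α, β, γ, δ} : Set ℂ) := by simp
    have key : ∀ x ∈ ({α, β, γ, δ} : Set ℂ),
        (℘ (z - x) - ℘ t) * (℘ (z + t - x) - ℘ t)
          = (℘ (z - α) - ℘ t) * (℘ (z + t - α) - ℘ t) := by
      intro x hx
      have h1 := F_const τ hτ ℘ h℘ t ht htL (hmem x hx).1 (hmem x hx).2
        (hmem α hα).1 (hmem α hα).2
      rw [show z - x + t = z + t - x from by ring,
        show z - α + t = z + t - α from by ring] at h1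
      exact h1
    exact crossRatio_eq_of_products _ _ _ _ _ _ _ _ (℘ t)
      ((℘ (z - α) - ℘ t) * (℘ (z + t - α) - ℘ t))
      (key α hα) (key β hβ) (key γ hγ) (key δ hδ) hden hden'
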